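/- arXiv:0908.3850 — 5 statements merged into one kernel-verified Lean document; each statement's English description precedes it below -/
import Mathlib

section
/- Let f_n be defined by f_0 = 1, f_1 = 0, f_{n+1}(x) = x·f_n(x) + f_{n-1}(x). Then for every real number ξ ≠ 0 and every natural number n, f_n(ξ - ξ^{-1}) = (ξ^{n-1} - (-ξ)^{-(n-1)}) / (ξ + ξ^{-1}), where the powers with exponent n-1 are integer powers (zpow). -/
open Polynomial

/-- The polynomials `f₀ = 1`, `f₁ = 0`, `f_{n+1}(x) = x·f_n(x) + f_{n-1}(x)`. -/
noncomputable def isingF : ℕ → Polynomial ℤ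
  | 0 => 1
  | 1 => 0
  | n + 2 => X * isingF (n + 1) + isingF n

lemma ising_key (ξ : ℝ) (hξ : ξ ≠ 0) (k : ℤ) :
    ξ ^ (k + 1) - (-ξ) ^ (-(k + 1))
      = (ξ - ξ⁻¹) * (ξ ^ k - (-ξ) ^ (-k)) + (ξ ^ (k - 1) - (-ξ) ^ (-(k - 1))) := by
  have hn : (-ξ) ≠ 0 := neg_ne_zero.mpr hξ
  have h1 : (-ξ) ^ (-(k + 1)) = (-ξ) ^ (-k) * (-ξ)⁻¹ := by
    rw [neg_add, zpow_add₀ hn, zpow_neg_one]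
  have h2 : (-ξ) ^ (-(k - 1)) = (-ξ) ^ (-k) * (-ξ) := by
    rw [neg_sub, show (1:ℤ) - k = -k + 1 by ring, zpow_add₀ hn, zpow_one]
  have h3 : ξ ^ (k + 1) = ξ ^ k * ξ := zpow_add_one₀ hξ k
  have h4 : ξ ^ (k - 1) = ξ ^ k * ξ⁻¹ := zpow_sub_one₀ hξ k
  rw [h1, h2, h3, h4]
  field_simp
  ring

theorem isingF_eval_xi (ξ : ℝ) (hξ : ξ ≠ 0) (n : ℕ) :
    Polynomial.aeval (ξ - ξ⁻¹) (isingF n)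
      = (ξ ^ ((n : ℤ) - 1) - (-ξ) ^ (-((n : ℤ) - 1))) / (ξ + ξ⁻¹) := by
  have hs : ξ + ξ⁻¹ ≠ 0 := by
    have h : ξ + ξ⁻¹ = (ξ ^ 2 + 1) / ξ := by field_simp
    rw [h]
    exact div_ne_zero (by positivity) hξ
  induction n using Nat.twoStepInduction with
  | zero =>
      simp only [isingF, map_one, Nat.cast_zero, zero_sub, neg_neg, zpow_one, zpow_neg_one]
      rw [eq_div_iff hs]; ring
  | one =>
      simp [isingF]
  | more n ih1 ih2 =>
      have h : isingF (n + 2) = X * isingF (n + 1) + isingF n := rfl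
      rw [h, map_add, map_mul, aeval_X, ih1, ih2]
      have e1 : ((n : ℤ) + 2) - 1 = ((n : ℤ)) + 1 := by ring
      have e2 : ((n : ℤ) + 1) - 1 = (n : ℤ) := by ring
      push_cast
      rw [e1, e2, ising_key ξ hξ (n:ℤ), add_div, mul_div_assoc]
end

section
/- Let G = (V,E) be a finite simple graph, let β : E → ℝ be edge weights and ξ : V → ℝ with ξ_i ≠ 0 for all i. Then Σ_{s ⊆ E} (Π_{e ∈ s} β_e) · Π_{i ∈ V} f_{deg_s(i)}(ξ_i - ξ_i^{-1}) = Σ_{x : V → {±1}} Π_{e={i,j} ∈ E} (1 + x_i·x_j·β_e·ξ_i^{-x_i}·ξ_j^{-x_j}) · Π_{i ∈ V} ξ_i^{x_i}/(ξ_i + ξ_i^{-1}), where the sum on the right is over all assignments x of ±1 to the vertices. -/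
open Polynomial

/-- The degree of vertex `i` in the spanning subgraph `(V, s)`:
the number of edges of `s` containing `i`. -/
def degIn {V : Type*} [DecidableEq V] (s : Finset (Sym2 V)) (i : V) : ℕ :=
  (s.filter (fun e => i ∈ e)).card

/-- `±1` value attached to a Boolean spin. -/
def spin (b : Bool) : ℤ := if b then 1 else -1

/-- The factor `1 + xᵢ·xⱼ·β_e·ξᵢ^{-xᵢ}·ξⱼ^{-xⱼ}` attached to the (unordered) edge `e = {i,j}`. -/
noncomputable def edgeFactor {V : Type*} (βw : Sym2 V → ℝ) (ξ : V → ℝ) (x : V → ℤ)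
    (e : Sym2 V) : ℝ :=
  Sym2.lift ⟨fun i j =>
      1 + ((x i : ℝ) * (x j : ℝ)) * βw e * ξ i ^ (-(x i)) * ξ j ^ (-(x j)),
    by intro i j; ring⟩ e

/-! ### Auxiliary lemmas -/

lemma isingF_eval (ξ : ℝ) (hξ : ξ ≠ 0) :
    ∀ d : ℕ, aeval (ξ - ξ⁻¹) (isingF d) * ((ξ + ξ⁻¹) * ξ ^ (d + 1))
      = ξ ^ (2 * d) + (-1 : ℝ) ^ d * ξ ^ 2
  | 0 => by
      simp only [isingF, map_one, one_mul, pow_zero, mul_zero, pow_one]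
      field_simp
      ring
  | 1 => by simp [isingF]
  | n + 2 => by
      have h1 := isingF_eval ξ hξ (n + 1)
      have h2 := isingF_eval ξ hξ n
      have hinv : ξ * ξ⁻¹ = 1 := mul_inv_cancel₀ hξ
      show aeval (ξ - ξ⁻¹) (X * isingF (n+1) + isingF n) * ((ξ + ξ⁻¹) * ξ ^ (n + 2 + 1))
        = ξ ^ (2 * (n+2)) + (-1:ℝ) ^ (n+2) * ξ ^ 2
      simp only [map_add, map_mul, aeval_X]
      linear_combination ((ξ - ξ⁻¹) * ξ) * h1 + ξ ^ 2 * h2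
        + (((-1:ℝ) ^ n * ξ ^ 2 - ξ ^ (2 * n + 2))) * hinv

lemma sum_spin (ξ : ℝ) (hξ : ξ ≠ 0) (d : ℕ) :
    ∑ b : Bool, ((spin b : ℝ) * ξ ^ (-(spin b))) ^ d * ξ ^ (spin b)
      = (-1 : ℝ) ^ d * (aeval (ξ - ξ⁻¹) (isingF d) * (ξ + ξ⁻¹)) := by
  have hB := isingF_eval ξ hξ d
  have hpow : (ξ : ℝ) ^ (d + 1) ≠ 0 := pow_ne_zero _ hξ
  have hinv : ξ * ξ⁻¹ = 1 := mul_inv_cancel₀ hξ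
  have hid : ξ⁻¹ ^ d * ξ ^ d = 1 := by
    rw [← mul_pow, inv_mul_cancel₀ hξ, one_pow]
  have h2d : ((-1 : ℝ)) ^ (d * 2) = 1 := by
    rw [pow_mul', neg_one_sq, one_pow]
  have hsum : ∑ b : Bool, ((spin b : ℝ) * ξ ^ (-(spin b))) ^ d * ξ ^ (spin b)
      = ξ⁻¹ ^ d * ξ + (-ξ) ^ d * ξ⁻¹ := by
    rw [Fintype.sum_bool]
    norm_num [spin]
  rw [hsum]
  apply mul_right_cancel₀ hpow
  linear_combination (-(-1 : ℝ) ^ d) * hB + (-ξ ^ 2) * h2d + ξ ^ 2 * hid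
    + (-1 : ℝ) ^ d * ξ ^ (2 * d) * hinv

lemma degIn_insert {V : Type*} [DecidableEq V] (e : Sym2 V) (s : Finset (Sym2 V))
    (he : e ∉ s) (i : V) :
    degIn (insert e s) i = (if i ∈ e then 1 else 0) + degIn s i := by
  unfold degIn
  rw [Finset.filter_insert]
  split
  · rw [Finset.card_insert_of_notMem (fun h => he (Finset.mem_of_mem_filter _ h))]
    omega
  · simp

lemma prod_mem_edge {V : Type*} [Fintype V] [DecidableEq V] (h : V → ℝ) (e : Sym2 V)
    (hd : ¬ e.IsDiag) :
    ∏ i : V, h i ^ (if i ∈ e then 1 else 0)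
      = Sym2.lift ⟨fun i j => h i * h j, fun i j => mul_comm _ _⟩ e := by
  induction e with
  | _ a b =>
    have hab : a ≠ b := by simpa using hd
    rw [Sym2.lift_mk]
    have key : ∀ i : V, h i ^ (if i ∈ s(a, b) then 1 else 0)
        = if i ∈ ({a, b} : Finset V) then h i else 1 := by
      intro i
      by_cases hi : i ∈ s(a, b)
      · have h2 : i ∈ ({a, b} : Finset V) := by
          simp only [Sym2.mem_iff] at hi
          simp [hi]
        rw [if_pos hi, if_pos h2, pow_one]
      · have h2 : i ∉ ({a, b} : Finset V) := by
          simp only [Sym2.mem_iff] at hi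
          simp [Finset.mem_insert]
          tauto
        rw [if_neg hi, if_neg h2, pow_zero]
    rw [Finset.prod_congr rfl (fun i _ => key i), Finset.prod_ite_mem,
        Finset.univ_inter, Finset.prod_pair hab]

lemma prod_lift_mul {V : Type*} [Fintype V] [DecidableEq V] (h : V → ℝ)
    (s : Finset (Sym2 V)) (hs : ∀ e ∈ s, ¬ e.IsDiag) :
    ∏ e ∈ s, Sym2.lift ⟨fun i j => h i * h j, fun i j => mul_comm _ _⟩ e
      = ∏ i : V, h i ^ degIn s i := by
  induction s using Finset.induction_on with
  | empty => simp [degIn]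
  | @insert e s he ih =>
    rw [Finset.prod_insert he,
      ih (fun e' he' => hs e' (Finset.mem_insert_of_mem he')),
      ← prod_mem_edge h e (hs e (Finset.mem_insert_self e s)),
      ← Finset.prod_mul_distrib]
    exact Finset.prod_congr rfl fun i _ => by rw [degIn_insert e s he, pow_add]

lemma sum_degIn {V : Type*} [Fintype V] [DecidableEq V] (s : Finset (Sym2 V))
    (hs : ∀ e ∈ s, ¬ e.IsDiag) :
    ∑ i : V, degIn s i = 2 * s.card := by
  unfold degIn
  simp_rw [Finset.card_filter]
  rw [Finset.sum_comm]
  rw [Finset.sum_congr rfl (fun e hes => ?_), Finset.sum_const, smul_eq_mul, mul_comm]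
  obtain ⟨a, b⟩ := e
  have hab : a ≠ b := by simpa using hs _ hes
  rw [← Finset.card_filter]
  have h2 : Finset.filter (fun i => i ∈ s(a,b)) Finset.univ = {a, b} := by
    ext i; simp [Sym2.mem_iff]
  rw [h2, Finset.card_pair hab]

theorem theta_vertex_state_sum {V : Type*} [Fintype V] [DecidableEq V]
    (G : SimpleGraph V) [DecidableRel G.Adj]
    (βw : Sym2 V → ℝ) (ξ : V → ℝ) (hξ : ∀ i, ξ i ≠ 0) :
    ∑ s ∈ G.edgeFinset.powerset,
        (∏ e ∈ s, βw e) * ∏ i : V, Polynomial.aeval (ξ i - (ξ i)⁻¹) (isingF (degIn s i))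
      = ∑ σ : V → Bool,
          (∏ e ∈ G.edgeFinset, edgeFactor βw ξ (fun i => spin (σ i)) e)
            * ∏ i : V, ξ i ^ (spin (σ i)) / (ξ i + (ξ i)⁻¹) := by
  classical
  have hden : ∀ i, ξ i + (ξ i)⁻¹ ≠ 0 := by
    intro i
    have h1 : ξ i + (ξ i)⁻¹ = (ξ i ^ 2 + 1) / ξ i := by
      rw [sq, eq_div_iff (hξ i), add_mul, inv_mul_cancel₀ (hξ i)]
    rw [h1]
    exact div_ne_zero (by positivity) (hξ i)
  have hdiag : ∀ t ∈ G.edgeFinset.powerset, ∀ e ∈ t, ¬ e.IsDiag := by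
    intro t ht e he
    exact G.not_isDiag_of_mem_edgeFinset (Finset.mem_powerset.mp ht he)
  symm
  -- Step 1: expand the edge product for each σ
  have step1 : ∀ σ : V → Bool,
      ∏ e ∈ G.edgeFinset, edgeFactor βw ξ (fun i => spin (σ i)) e
        = ∑ t ∈ G.edgeFinset.powerset, (∏ e ∈ t, βw e)
            * ∏ i : V, ((spin (σ i) : ℝ) * ξ i ^ (-(spin (σ i)))) ^ degIn t i := by
    intro σ
    have h0 : ∀ e ∈ G.edgeFinset, edgeFactor βw ξ (fun i => spin (σ i)) e
        = βw e * Sym2.lift ⟨fun i j =>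
            ((spin (σ i) : ℝ) * ξ i ^ (-(spin (σ i))))
              * ((spin (σ j) : ℝ) * ξ j ^ (-(spin (σ j)))),
            fun i j => mul_comm _ _⟩ e + 1 := by
      intro e _
      induction e with
      | _ a b =>
        simp only [edgeFactor, Sym2.lift_mk]
        ring
    rw [Finset.prod_congr rfl h0, Finset.prod_add]
    refine Finset.sum_congr rfl fun t ht => ?_
    rw [Finset.prod_const_one, mul_one, Finset.prod_mul_distrib,
      prod_lift_mul _ t (hdiag t ht)]
  simp only [step1]
  -- Step 2: distribute and swap the two sums
  simp only [Finset.sum_mul]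
  rw [Finset.sum_comm]
  refine Finset.sum_congr rfl fun t ht => ?_
  -- Step 3: per subgraph t, factor over vertices
  have step3 : ∀ σ : V → Bool,
      (∏ e ∈ t, βw e) * (∏ i : V, ((spin (σ i) : ℝ) * ξ i ^ (-(spin (σ i)))) ^ degIn t i)
          * ∏ i : V, ξ i ^ (spin (σ i)) / (ξ i + (ξ i)⁻¹)
        = (∏ e ∈ t, βw e) * ∏ i : V,
            (((spin (σ i) : ℝ) * ξ i ^ (-(spin (σ i)))) ^ degIn t i
              * (ξ i ^ (spin (σ i)) / (ξ i + (ξ i)⁻¹))) := by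
    intro σ
    rw [Finset.prod_mul_distrib, mul_assoc]
  simp only [step3]
  rw [← Finset.mul_sum]
  congr 1
  -- Step 4: swap sum over σ and product over i
  have step4 : ∑ σ : V → Bool, ∏ i : V,
        (((spin (σ i) : ℝ) * ξ i ^ (-(spin (σ i)))) ^ degIn t i
          * (ξ i ^ (spin (σ i)) / (ξ i + (ξ i)⁻¹)))
      = ∏ i : V, ∑ b : Bool,
        (((spin b : ℝ) * ξ i ^ (-(spin b))) ^ degIn t i
          * (ξ i ^ (spin b) / (ξ i + (ξ i)⁻¹))) := by
    rw [Finset.prod_univ_sum]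
    rw [Fintype.piFinset_univ]
  rw [step4]
  -- Step 5: evaluate each vertex sum
  have step5 : ∀ i : V, ∑ b : Bool,
        (((spin b : ℝ) * ξ i ^ (-(spin b))) ^ degIn t i
          * (ξ i ^ (spin b) / (ξ i + (ξ i)⁻¹)))
      = (-1 : ℝ) ^ degIn t i * aeval (ξ i - (ξ i)⁻¹) (isingF (degIn t i)) := by
    intro i
    simp_rw [← mul_div_assoc, ← Finset.sum_div]
    rw [sum_spin (ξ i) (hξ i) (degIn t i), ← mul_assoc, mul_div_assoc,
      div_self (hden i), mul_one]
  simp only [step5]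
  -- Step 6: the signs cancel by the handshake lemma
  rw [Finset.prod_mul_distrib, Finset.prod_pow_eq_pow_sum, sum_degIn t (hdiag t ht),
    pow_mul, neg_one_sq, one_pow, one_mul]
end

section
/- Let G = (V,E) be a finite connected simple graph with nullity n = |E| - |V| + 1, and let ξ be a nonzero real number. Then Σ_{s ⊆ E} Π_{i ∈ V} f_{deg_s(i)}(ξ - ξ^{-1}) = ξ^{1-n}·(ξ+ξ^{-1})^{n-1} + ξ^{n-1}·(ξ+ξ^{-1})^{n-1}, where all powers with exponents 1-n and n-1 are integer powers (zpow). -/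
open Polynomial

namespace ThetaBetaAux

open Finset

lemma zpow_sum₀' {x : ℝ} (hx : x ≠ 0) {α : Type*} (s : Finset α) (f : α → ℤ) :
    x ^ (∑ i ∈ s, f i) = ∏ i ∈ s, x ^ f i := by
  classical
  induction s using Finset.cons_induction with
  | empty => simp
  | cons a s ha ih => rw [Finset.sum_cons, Finset.prod_cons, zpow_add₀ hx, ih]

lemma closed_form (ξ : ℝ) (hξ : ξ ≠ 0) (d : ℕ) :
    (ξ + ξ⁻¹) * Polynomial.aeval (ξ - ξ⁻¹) (isingF d)
      = ξ ^ ((d : ℤ) - 1) - (-ξ⁻¹) ^ ((d : ℤ) - 1) := by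
  have hη : (-ξ⁻¹ : ℝ) ≠ 0 := by simpa using inv_ne_zero hξ
  induction d using Nat.twoStepInduction with
  | zero =>
      simp only [isingF, map_one, mul_one, Nat.cast_zero, zero_sub]
      rw [zpow_neg_one, zpow_neg_one]
      rw [show ((-ξ⁻¹)⁻¹ : ℝ) = -ξ by field_simp]
      ring
  | one => simp [isingF]
  | more d ih ih1 =>
      have e2 : ((d + 2 : ℕ) : ℤ) - 1 = ((d:ℤ) - 1) + 1 + 1 := by push_cast; ring
      have e1 : ((d + 1 : ℕ) : ℤ) - 1 = ((d:ℤ) - 1) + 1 := by push_cast; ring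
      rw [e1] at ih1
      rw [show isingF (d+2) = X * isingF (d+1) + isingF d from rfl]
      rw [map_add, map_mul, aeval_X, e2]
      rw [zpow_add_one₀ hξ, zpow_add_one₀ hη, zpow_add_one₀ hξ, zpow_add_one₀ hη] at *
      have h1 : ξ * ξ⁻¹ = 1 := mul_inv_cancel₀ hξ
      linear_combination (ξ - ξ⁻¹) * ih1 + ih
        - (ξ ^ ((d:ℤ)-1) - (-ξ⁻¹) ^ ((d:ℤ)-1)) * h1

variable {V : Type*} [Fintype V] [DecidableEq V]

/-- Number of endpoints of `e` lying in `T`. -/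
def cnt (T : Finset V) (e : Sym2 V) : ℕ := (T.filter (fun i => i ∈ e)).card

lemma cnt_univ_eq (e : Sym2 V) (he : ¬ e.IsDiag) : cnt (univ : Finset V) e = 2 := by
  induction e with
  | h u v =>
    have huv : u ≠ v := by simpa [Sym2.isDiag_iff_proj_eq] using he
    have : (univ : Finset V).filter (fun i => i ∈ s(u,v)) = {u, v} := by
      ext i; simp [Sym2.mem_iff]
    rw [cnt, this, card_insert_of_notMem (by simpa using huv), card_singleton]

lemma cnt_add (T : Finset V) (e : Sym2 V) (he : ¬ e.IsDiag) :
    cnt T e + cnt (univ \ T) e = 2 := by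
  rw [← cnt_univ_eq e he]
  unfold cnt
  rw [← card_union_of_disjoint, ← filter_union, union_sdiff_of_subset (subset_univ T)]
  exact Finset.disjoint_filter_filter (disjoint_sdiff)

omit [Fintype V] in
lemma cnt_one {T : Finset V} {u v : V} (hu : u ∈ T) (hv : v ∉ T) : cnt T s(u,v) = 1 := by
  have : T.filter (fun i => i ∈ s(u,v)) = {u} := by
    ext i
    simp only [mem_filter, Sym2.mem_iff, mem_singleton]
    constructor
    · rintro ⟨hiT, rfl | rfl⟩
      · rfl
      · exact absurd hiT hv
    · rintro rfl; exact ⟨hu, Or.inl rfl⟩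
  rw [cnt, this, card_singleton]

omit [Fintype V] in
lemma cnt_empty (e : Sym2 V) : cnt (∅ : Finset V) e = 0 := by simp [cnt]

omit [Fintype V] [DecidableEq V] in
lemma exists_cross {G : SimpleGraph V} {T : Finset V} {v : V} (hv : v ∉ T) :
    ∀ {u : V}, G.Walk u v → u ∈ T → ∃ a b, G.Adj a b ∧ a ∈ T ∧ b ∉ T
  | u, SimpleGraph.Walk.nil, hu => absurd hu hv
  | u, @SimpleGraph.Walk.cons _ _ _ b _ h p, hu => by
    by_cases hb : b ∈ T
    · exact exists_cross hv p hb
    · exact ⟨_, _, h, hu, hb⟩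

omit [Fintype V] in
lemma sum_degIn (s : Finset (Sym2 V)) (T : Finset V) :
    ∑ i ∈ T, degIn s i = ∑ e ∈ s, cnt T e := by
  unfold degIn cnt
  simp_rw [Finset.card_filter]
  rw [Finset.sum_comm]

lemma inner_sum_pw (G : SimpleGraph V) [DecidableRel G.Adj]
    (ξ : ℝ) (hξ : ξ ≠ 0) (T : Finset V) :
    ∑ s ∈ G.edgeFinset.powerset,
        (∏ i ∈ T, ξ ^ ((degIn s i : ℤ) - 1)) *
        (∏ i ∈ univ \ T, -((-ξ⁻¹) ^ ((degIn s i : ℤ) - 1)))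
      = ((-1:ℝ) ^ ((univ \ T).card) * ξ ^ (-(T.card : ℤ)) * (-ξ⁻¹) ^ (-(((univ \ T).card : ℤ)))) *
        ∏ e ∈ G.edgeFinset, (1 + ξ ^ (cnt T e : ℤ) * (-ξ⁻¹) ^ (2 - (cnt T e : ℤ))) := by
  have hη : (-ξ⁻¹ : ℝ) ≠ 0 := by simpa using inv_ne_zero hξ
  have key : ∀ s ∈ G.edgeFinset.powerset,
      (∏ i ∈ T, ξ ^ ((degIn s i : ℤ) - 1)) *
      (∏ i ∈ univ \ T, -((-ξ⁻¹) ^ ((degIn s i : ℤ) - 1)))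
      = ((-1:ℝ) ^ ((univ \ T).card) * ξ ^ (-(T.card : ℤ)) * (-ξ⁻¹) ^ (-(((univ \ T).card : ℤ)))) *
        ∏ e ∈ s, (ξ ^ (cnt T e : ℤ) * (-ξ⁻¹) ^ (2 - (cnt T e : ℤ))) := by
    intro s hs
    rw [Finset.mem_powerset] at hs
    have hnd : ∀ e ∈ s, ¬ e.IsDiag := fun e he =>
      (SimpleGraph.not_isDiag_of_mem_edgeFinset (hs he))
    have sum1 : ∀ (U : Finset V), ∑ i ∈ U, ((degIn s i : ℤ) - 1)
        = (∑ e ∈ s, (cnt U e : ℤ)) - U.card := by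
      intro U
      rw [Finset.sum_sub_distrib, Finset.sum_const, nsmul_eq_mul, mul_one]
      congr 1
      rw [← Nat.cast_sum, ← Nat.cast_sum, sum_degIn]
    have hT : ∏ i ∈ T, ξ ^ ((degIn s i : ℤ) - 1)
        = ξ ^ (∑ e ∈ s, (cnt T e : ℤ)) * ξ ^ (-(T.card : ℤ)) := by
      rw [← zpow_add₀ hξ, ← sub_eq_add_neg, ← sum1, zpow_sum₀' hξ]
    have hC : ∏ i ∈ univ \ T, -((-ξ⁻¹) ^ ((degIn s i : ℤ) - 1))
        = (-1:ℝ) ^ ((univ \ T).card) *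
          ((-ξ⁻¹) ^ (∑ e ∈ s, (2 - (cnt T e : ℤ))) * (-ξ⁻¹) ^ (-(((univ \ T).card : ℤ)))) := by
      have h2 : ∑ e ∈ s, ((cnt (univ \ T) e : ℤ)) = ∑ e ∈ s, (2 - (cnt T e : ℤ)) := by
        refine Finset.sum_congr rfl fun e he => ?_
        have := cnt_add T e (hnd e he)
        omega
      rw [← zpow_add₀ hη, ← sub_eq_add_neg, ← h2, ← sum1, zpow_sum₀' hη]
      simp_rw [fun i : V => (neg_one_mul ((-ξ⁻¹) ^ ((degIn s i : ℤ) - 1))).symm]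
      rw [Finset.prod_mul_distrib, Finset.prod_const]
    rw [hT, hC, zpow_sum₀' hξ, zpow_sum₀' hη, Finset.prod_mul_distrib]
    ring
  rw [Finset.sum_congr rfl key, ← Finset.mul_sum]
  congr 1
  have hpa := Finset.prod_add
      (fun e => ξ ^ (cnt T e : ℤ) * (-ξ⁻¹) ^ (2 - (cnt T e : ℤ)))
      (fun _ => (1:ℝ)) G.edgeFinset
  simp only [Finset.prod_const_one, mul_one] at hpa
  rw [← hpa]
  exact Finset.prod_congr rfl fun e _ => add_comm _ _

end ThetaBetaAux

open ThetaBetaAux Finset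

theorem theta_beta_one {V : Type*} [Fintype V] [DecidableEq V]
    (G : SimpleGraph V) [DecidableRel G.Adj] (hconn : G.Connected)
    (n : ℤ) (hn : n = (G.edgeFinset.card : ℤ) - (Fintype.card V : ℤ) + 1)
    (ξ : ℝ) (hξ : ξ ≠ 0) :
    ∑ s ∈ G.edgeFinset.powerset, ∏ i : V, Polynomial.aeval (ξ - ξ⁻¹) (isingF (degIn s i))
      = ξ ^ (1 - n) * (ξ + ξ⁻¹) ^ (n - 1) + ξ ^ (n - 1) * (ξ + ξ⁻¹) ^ (n - 1) := by
  classical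
  have hη : (-ξ⁻¹ : ℝ) ≠ 0 := by simpa using inv_ne_zero hξ
  have hK : ξ + ξ⁻¹ ≠ 0 := by
    intro h
    have h2 : ξ * (ξ + ξ⁻¹) = 0 := by rw [h]; ring
    rw [mul_add, mul_inv_cancel₀ hξ] at h2
    nlinarith [sq_nonneg ξ]
  haveI : Nonempty V := hconn.nonempty
  set m := Fintype.card V with hm
  apply mul_left_cancel₀ (pow_ne_zero m hK)
  have step : (ξ + ξ⁻¹) ^ m *
      ∑ s ∈ G.edgeFinset.powerset, ∏ i : V, Polynomial.aeval (ξ - ξ⁻¹) (isingF (degIn s i))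
      = ∑ T ∈ (univ : Finset V).powerset,
          ((-1:ℝ) ^ ((univ \ T).card) * ξ ^ (-(T.card : ℤ)) *
            (-ξ⁻¹) ^ (-(((univ \ T).card : ℤ)))) *
          ∏ e ∈ G.edgeFinset, (1 + ξ ^ (cnt T e : ℤ) * (-ξ⁻¹) ^ (2 - (cnt T e : ℤ))) := by
    rw [Finset.mul_sum]
    have h1 : ∀ s ∈ G.edgeFinset.powerset,
        (ξ + ξ⁻¹) ^ m * ∏ i : V, Polynomial.aeval (ξ - ξ⁻¹) (isingF (degIn s i))
        = ∑ T ∈ (univ : Finset V).powerset,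
            (∏ i ∈ T, ξ ^ ((degIn s i : ℤ) - 1)) *
            (∏ i ∈ univ \ T, -((-ξ⁻¹) ^ ((degIn s i : ℤ) - 1))) := by
      intro s _
      rw [← Finset.prod_add]
      rw [show (ξ + ξ⁻¹) ^ m = ∏ _i : V, (ξ + ξ⁻¹) by
        rw [Finset.prod_const, Finset.card_univ], ← Finset.prod_mul_distrib]
      refine Finset.prod_congr rfl fun i _ => ?_
      rw [closed_form ξ hξ, sub_eq_add_neg]
    rw [Finset.sum_congr rfl h1, Finset.sum_comm]
    exact Finset.sum_congr rfl fun T _ => inner_sum_pw G ξ hξ T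
  rw [step]
  -- evaluate the sum over T: only ∅ and univ survive
  have hzero : ∀ T ∈ (univ : Finset V).powerset,
      T ∉ ({∅, univ} : Finset (Finset V)) →
      ((-1:ℝ) ^ ((univ \ T).card) * ξ ^ (-(T.card : ℤ)) *
            (-ξ⁻¹) ^ (-(((univ \ T).card : ℤ)))) *
          ∏ e ∈ G.edgeFinset, (1 + ξ ^ (cnt T e : ℤ) * (-ξ⁻¹) ^ (2 - (cnt T e : ℤ))) = 0 := by
    intro T _ hT
    simp only [Finset.mem_insert, Finset.mem_singleton] at hT
    push_neg at hT
    obtain ⟨hTne, hTuniv⟩ := hT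
    obtain ⟨u, hu⟩ := hTne
    obtain ⟨v, hv⟩ := Finset.sdiff_nonempty.2 (fun h => hTuniv (Finset.univ_subset_iff.1 h))
    have hv' : v ∉ T := (Finset.mem_sdiff.1 hv).2
    obtain ⟨p⟩ := hconn.preconnected u v
    obtain ⟨a, b, hab, haT, hbT⟩ := exists_cross hv' p hu
    have he : s(a,b) ∈ G.edgeFinset := SimpleGraph.mem_edgeFinset.2 hab
    have hcnt : cnt T s(a,b) = 1 := cnt_one haT hbT
    have hfac : (1:ℝ) + ξ ^ (cnt T s(a,b) : ℤ) * (-ξ⁻¹) ^ (2 - (cnt T s(a,b) : ℤ)) = 0 := by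
      rw [hcnt]
      norm_num [mul_inv_cancel₀ hξ]
    rw [Finset.prod_eq_zero he hfac, mul_zero]
  rw [← Finset.sum_subset (by
        intro T hT
        simp only [Finset.mem_insert, Finset.mem_singleton] at hT
        rcases hT with rfl | rfl <;> simp) hzero]
  have hne : (∅ : Finset V) ≠ univ := by
    exact fun h => (Finset.univ_nonempty (α := V)).ne_empty h.symm
  rw [Finset.sum_pair hne]
  -- compute the two surviving terms
  have hterm_empty :
      ((-1:ℝ) ^ ((univ \ (∅:Finset V)).card) * ξ ^ (-((∅:Finset V).card : ℤ)) *
            (-ξ⁻¹) ^ (-(((univ \ (∅:Finset V)).card : ℤ)))) *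
          ∏ e ∈ G.edgeFinset, (1 + ξ ^ (cnt (∅:Finset V) e : ℤ) * (-ξ⁻¹) ^ (2 - (cnt (∅:Finset V) e : ℤ)))
      = (-1:ℝ)^m * (-ξ⁻¹) ^ (-(m:ℤ)) * (1 + (-ξ⁻¹) * (-ξ⁻¹)) ^ G.edgeFinset.card := by
    rw [Finset.sdiff_empty, Finset.card_univ, ← hm, Finset.card_empty]
    have : ∀ e ∈ G.edgeFinset, (1:ℝ) + ξ ^ (cnt (∅:Finset V) e : ℤ) * (-ξ⁻¹) ^ (2 - (cnt (∅:Finset V) e : ℤ))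
        = 1 + (-ξ⁻¹) * (-ξ⁻¹) := by
      intro e _
      rw [cnt_empty, Nat.cast_zero, zpow_zero, one_mul, sub_zero]
      norm_num [zpow_two, sq]
    rw [Finset.prod_congr rfl this, Finset.prod_const]
    norm_num
  have hterm_univ :
      ((-1:ℝ) ^ ((univ \ (univ:Finset V)).card) * ξ ^ (-((univ:Finset V).card : ℤ)) *
            (-ξ⁻¹) ^ (-(((univ \ (univ:Finset V)).card : ℤ)))) *
          ∏ e ∈ G.edgeFinset, (1 + ξ ^ (cnt (univ:Finset V) e : ℤ) * (-ξ⁻¹) ^ (2 - (cnt (univ:Finset V) e : ℤ)))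
      = ξ ^ (-(m:ℤ)) * (1 + ξ^(2:ℕ)) ^ G.edgeFinset.card := by
    rw [Finset.sdiff_self, Finset.card_empty, Finset.card_univ, ← hm]
    have : ∀ e ∈ G.edgeFinset, (1:ℝ) + ξ ^ (cnt (univ:Finset V) e : ℤ) * (-ξ⁻¹) ^ (2 - (cnt (univ:Finset V) e : ℤ))
        = 1 + ξ^(2:ℕ) := by
      intro e he
      rw [cnt_univ_eq e (SimpleGraph.not_isDiag_of_mem_edgeFinset he), zpow_natCast]
      norm_num
    rw [Finset.prod_congr rfl this, Finset.prod_const]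
    norm_num
  rw [hterm_empty, hterm_univ]
  -- final algebra
  subst hn
  set a := G.edgeFinset.card with ha
  have h2 : ((1:ℝ) + ξ^(2:ℕ)) = ξ * (ξ + ξ⁻¹) := by
    rw [mul_add, mul_inv_cancel₀ hξ]; ring
  have h3 : ((1:ℝ) + (-ξ⁻¹) * (-ξ⁻¹)) = ξ⁻¹ * (ξ + ξ⁻¹) := by
    rw [mul_add, inv_mul_cancel₀ hξ]; ring
  have h4 : ((-ξ⁻¹:ℝ)) ^ (-(m:ℤ)) = (-1:ℝ)^m * ξ ^ m := by
    rw [zpow_neg, zpow_natCast, neg_inv, inv_pow, inv_inv, neg_pow]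
  have h5 : (-1:ℝ)^m * ((-1:ℝ)^m * ξ^m) = ξ^m := by
    rw [← mul_assoc, ← mul_pow]; norm_num
  rw [h2, h3, h4, h5]
  have hxm : (ξ:ℝ)^m ≠ 0 := pow_ne_zero _ hξ
  have hxa : (ξ:ℝ)^a ≠ 0 := pow_ne_zero _ hξ
  have hKa : (ξ + ξ⁻¹)^a ≠ 0 := pow_ne_zero _ hK
  have hKm : (ξ + ξ⁻¹)^m ≠ 0 := pow_ne_zero _ hK
  have e1 : ((a:ℤ) - m + 1 - 1) = (a:ℤ) - m := by ring
  have e2 : (1 - ((a:ℤ) - m + 1)) = (m:ℤ) - a := by ring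
  rw [e1, e2, zpow_sub₀ hξ, zpow_sub₀ hξ, zpow_sub₀ hK, zpow_natCast, zpow_natCast,
    zpow_natCast, zpow_natCast, zpow_neg, zpow_natCast, mul_pow, mul_pow]
  simp only [inv_pow]
  revert hxm hxa hKm hKa
  generalize ξ ^ m = M
  generalize ξ ^ a = A
  generalize (ξ + ξ⁻¹) ^ m = Q
  generalize (ξ + ξ⁻¹) ^ a = P
  intro hM hA hQ hP
  field_simp
end

section
/- Let G = (V,E) be a finite connected simple graph with nullity n = |E| - |V| + 1. Then Σ_{s ⊆ E} Π_{i ∈ V} f_{deg_s(i)}(1) = ((5-√5)/2)^{n-1} + ((5+√5)/2)^{n-1}, where the powers with integer exponent n-1 are taken in ℝ (zpow). -/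
open Polynomial

open Finset

noncomputable def ph : ℝ := (1 + Real.sqrt 5) / 2
noncomputable def ps : ℝ := (1 - Real.sqrt 5) / 2

lemma sqrt5_sq : Real.sqrt 5 * Real.sqrt 5 = 5 := Real.mul_self_sqrt (by norm_num)
lemma sqrt5_pos : (0:ℝ) < Real.sqrt 5 := Real.sqrt_pos.2 (by norm_num)
lemma ph_mul_ps : ph * ps = -1 := by
  unfold ph ps; have := sqrt5_sq; ring_nf; nlinarith [sqrt5_sq]
lemma ph_sub_ps : ph - ps = Real.sqrt 5 := by unfold ph ps; ring
lemma ph_ne : ph ≠ 0 := by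
  unfold ph; positivity
lemma ps_ne : ps ≠ 0 := by
  intro h; have := ph_mul_ps; rw [h, mul_zero] at this; norm_num at this
lemma ph_sq : ph ^ 2 = ph + 1 := by unfold ph; nlinarith [sqrt5_sq]
lemma ps_sq : ps ^ 2 = ps + 1 := by unfold ps; nlinarith [sqrt5_sq]

lemma zpow_fib {x : ℝ} (hx : x ≠ 0) (hsq : x ^ 2 = x + 1) (m : ℤ) :
    x ^ (m + 1) = x ^ m + x ^ (m - 1) := by
  have h1 : x ^ (m + 1) = x ^ (m - 1) * x ^ (2:ℤ) := by
    rw [← zpow_add₀ hx]; ring_nf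
  have h2 : x ^ (m:ℤ) = x ^ (m - 1) * x ^ (1:ℤ) := by
    rw [← zpow_add₀ hx]; ring_nf
  rw [h1, h2, zpow_one, zpow_two, ← sq, hsq]; ring

lemma isingF_eval_s9 : ∀ d : ℕ, (Polynomial.aeval (1:ℝ)) (isingF d)
    = (ph ^ ((d:ℤ) - 1) - ps ^ ((d:ℤ) - 1)) / Real.sqrt 5
  | 0 => by
    simp only [isingF, map_one, Nat.cast_zero, zero_sub]
    rw [zpow_neg, zpow_neg, zpow_one, zpow_one, eq_div_iff (ne_of_gt sqrt5_pos)]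
    rw [inv_sub_inv ph_ne ps_ne]
    rw [show ps - ph = -Real.sqrt 5 by rw [← ph_sub_ps]; ring, ph_mul_ps]
    field_simp
  | 1 => by simp [isingF]
  | (d + 2) => by
    have h1 := isingF_eval_s9 (d + 1)
    have h0 := isingF_eval_s9 d
    have e2 : ((d + 2 : ℕ) : ℤ) - 1 = (d : ℤ) + 1 := by push_cast; ring
    have e1 : ((d + 1 : ℕ) : ℤ) - 1 = (d : ℤ) := by push_cast; ring
    simp only [isingF, map_add, map_mul, aeval_X, h1, h0, e2, e1, one_mul]
    rw [zpow_fib ph_ne ph_sq, zpow_fib ps_ne ps_sq]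
    ring

lemma one_add_ph_sq : 1 + ph * ph = Real.sqrt 5 * ph := by
  have h : Real.sqrt 5 * ph = (ph - ps) * ph := by rw [ph_sub_ps]
  nlinarith [ph_sq, ph_mul_ps]
lemma one_add_ps_sq : 1 + ps * ps = -(Real.sqrt 5 * ps) := by
  have h : Real.sqrt 5 * ps = (ph - ps) * ps := by rw [ph_sub_ps]
  nlinarith [ps_sq, ph_mul_ps]

set_option linter.unusedSectionVars false

section
variable {V : Type*} [Fintype V] [DecidableEq V]


lemma prod_pow_degIn (c : V → ℝ) (s : Finset (Sym2 V)) :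
    ∏ i : V, c i ^ (degIn s i) = ∏ e ∈ s, ∏ i : V, (if i ∈ e then c i else 1) := by
  rw [Finset.prod_comm]
  refine Finset.prod_congr rfl fun i _ => ?_
  rw [degIn, Finset.card_filter, ← Finset.prod_pow_eq_pow_sum]
  refine Finset.prod_congr rfl fun e _ => ?_
  split_ifs <;> simp

lemma prod_ite_mem (c : V → ℝ) (u v : V) (huv : u ≠ v) :
    ∏ i : V, (if i ∈ s(u,v) then c i else 1) = c u * c v := by
  rw [← Finset.prod_filter]
  have hf : Finset.univ.filter (fun i => i ∈ s(u,v)) = {u, v} := by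
    ext i; simp [Sym2.mem_iff]
  rw [hf, Finset.prod_pair huv]

lemma exists_cross {G : SimpleGraph V} {σ : V → Prop} [DecidablePred σ] {u v : V}
    (p : G.Walk u v) (h : σ u ∧ ¬ σ v) : ∃ x y, G.Adj x y ∧ σ x ∧ ¬ σ y := by
  induction p with
  | nil => exact absurd h.1 h.2
  | @cons a b c hadj p ih =>
      by_cases hb : σ b
      · exact ih ⟨hb, h.2⟩
      · exact ⟨a, b, hadj, h.1, hb⟩

lemma sum_prod_W (E : Finset (Sym2 V)) (W : Sym2 V → ℝ) :
    ∑ s ∈ E.powerset, ∏ e ∈ s, W e = ∏ e ∈ E, (1 + W e) := by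
  simp only [add_comm (1:ℝ)]
  rw [Finset.prod_add]
  refine Finset.sum_congr rfl fun t _ => ?_
  simp

-- main algebraic expansion for a fixed spanning subgraph s
lemma step1 (s : Finset (Sym2 V)) :
    ∏ i : V, ((ph ^ ((degIn s i : ℤ) - 1) - ps ^ ((degIn s i : ℤ) - 1)) / Real.sqrt 5)
      = ((Real.sqrt 5) ^ (Fintype.card V))⁻¹ *
        ∑ t ∈ (Finset.univ : Finset V).powerset,
          (-1 : ℝ) ^ ((Finset.univ \ t).card) *
            ((∏ i : V, (if i ∈ t then ph else ps))⁻¹ *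
              ∏ e ∈ s, ∏ i : V, (if i ∈ e then (if i ∈ t then ph else ps) else 1)) := by
  rw [Finset.prod_div_distrib, Finset.prod_const, Finset.card_univ, div_eq_inv_mul]
  congr 1
  have hsub : ∀ i : V, ph ^ ((degIn s i : ℤ) - 1) - ps ^ ((degIn s i : ℤ) - 1)
      = ph ^ ((degIn s i : ℤ) - 1) + (-(ps ^ ((degIn s i : ℤ) - 1))) := fun i => by ring
  simp only [hsub]
  rw [Finset.prod_add]
  refine Finset.sum_congr rfl fun t ht => ?_
  have hts : t ⊆ Finset.univ := Finset.mem_powerset.1 ht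
  set c : V → ℝ := fun i => if i ∈ t then ph else ps with hc
  have hcne : ∀ i, c i ≠ 0 := fun i => by
    by_cases h : i ∈ t <;> simp [hc, h, ph_ne, ps_ne]
  have hneg : ∏ i ∈ Finset.univ \ t, (-(ps ^ ((degIn s i : ℤ) - 1)))
      = (-1:ℝ) ^ ((Finset.univ \ t).card) * ∏ i ∈ Finset.univ \ t, ps ^ ((degIn s i : ℤ) - 1) := by
    have h' : ∀ i ∈ Finset.univ \ t, -(ps ^ ((degIn s i : ℤ) - 1))
        = (-1:ℝ) * ps ^ ((degIn s i : ℤ) - 1) := fun i _ => by ring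
    rw [Finset.prod_congr rfl h', Finset.prod_mul_distrib, Finset.prod_const]
  rw [hneg]
  have hmerge : (∏ i ∈ t, ph ^ ((degIn s i : ℤ) - 1)) *
      ∏ i ∈ Finset.univ \ t, ps ^ ((degIn s i : ℤ) - 1)
      = ∏ i : V, c i ^ ((degIn s i : ℤ) - 1) := by
    rw [← Finset.prod_sdiff hts, mul_comm]
    congr 1
    · exact Finset.prod_congr rfl fun i hi => by
        rw [hc]; simp [(Finset.mem_sdiff.1 hi).2]
    · exact Finset.prod_congr rfl fun i hi => by rw [hc]; simp [hi]
  have hsplit : ∏ i : V, c i ^ ((degIn s i : ℤ) - 1)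
      = (∏ i : V, c i)⁻¹ * ∏ e ∈ s, ∏ i : V, (if i ∈ e then c i else 1) := by
    have : ∀ i : V, c i ^ ((degIn s i : ℤ) - 1) = c i ^ (degIn s i) * (c i)⁻¹ := by
      intro i
      rw [zpow_sub_one₀ (hcne i), zpow_natCast]
    simp only [this]
    rw [Finset.prod_mul_distrib, ← Finset.prod_inv_distrib, prod_pow_degIn]
    ring
  calc (∏ i ∈ t, ph ^ ((degIn s i : ℤ) - 1)) *
        ((-1:ℝ) ^ ((Finset.univ \ t).card) * ∏ i ∈ Finset.univ \ t, ps ^ ((degIn s i : ℤ) - 1))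
      = (-1:ℝ) ^ ((Finset.univ \ t).card) * ((∏ i ∈ t, ph ^ ((degIn s i : ℤ) - 1)) *
          ∏ i ∈ Finset.univ \ t, ps ^ ((degIn s i : ℤ) - 1)) := by ring
    _ = _ := by rw [hmerge, hsplit]

end

theorem theta_one_one {V : Type*} [Fintype V] [DecidableEq V]
    (G : SimpleGraph V) [DecidableRel G.Adj] (hconn : G.Connected)
    (n : ℤ) (hn : n = (G.edgeFinset.card : ℤ) - (Fintype.card V : ℤ) + 1) :
    ∑ s ∈ G.edgeFinset.powerset, ∏ i : V, Polynomial.aeval (1 : ℝ) (isingF (degIn s i))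
      = ((5 - Real.sqrt 5) / 2) ^ (n - 1) + ((5 + Real.sqrt 5) / 2) ^ (n - 1) := by
  classical
  have hnev : Nonempty V := hconn.nonempty
  set N := Fintype.card V with hN
  set m := G.edgeFinset.card with hm
  set ct : Finset V → V → ℝ := fun t i => if i ∈ t then ph else ps with hct
  set W : Finset V → Sym2 V → ℝ := fun t e => ∏ i : V, (if i ∈ e then ct t i else 1) with hW
  -- Step 1: expand and swap sums
  have h1 : ∑ s ∈ G.edgeFinset.powerset, ∏ i : V, Polynomial.aeval (1 : ℝ) (isingF (degIn s i))
      = ((Real.sqrt 5) ^ N)⁻¹ * ∑ t ∈ (Finset.univ : Finset V).powerset,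
          (-1 : ℝ) ^ ((Finset.univ \ t).card) *
            ((∏ i : V, ct t i)⁻¹ * ∏ e ∈ G.edgeFinset, (1 + W t e)) := by
    have e1 : ∀ s ∈ G.edgeFinset.powerset,
        ∏ i : V, Polynomial.aeval (1 : ℝ) (isingF (degIn s i))
        = ((Real.sqrt 5) ^ N)⁻¹ * ∑ t ∈ (Finset.univ : Finset V).powerset,
            (-1 : ℝ) ^ ((Finset.univ \ t).card) *
              ((∏ i : V, ct t i)⁻¹ * ∏ e ∈ s, W t e) := by
      intro s _
      rw [show ∏ i : V, Polynomial.aeval (1 : ℝ) (isingF (degIn s i))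
          = ∏ i : V, ((ph ^ ((degIn s i : ℤ) - 1) - ps ^ ((degIn s i : ℤ) - 1)) / Real.sqrt 5)
          from Finset.prod_congr rfl fun i _ => isingF_eval_s9 (degIn s i)]
      exact step1 s
    rw [Finset.sum_congr rfl e1, ← Finset.mul_sum]
    congr 1
    rw [Finset.sum_comm]
    refine Finset.sum_congr rfl fun t _ => ?_
    rw [← Finset.mul_sum, ← Finset.mul_sum, sum_prod_W]
  rw [h1]
  -- Step 2: only t = ∅ and t = univ contribute
  set F : Finset V → ℝ := fun t => (-1 : ℝ) ^ ((Finset.univ \ t).card) *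
      ((∏ i : V, ct t i)⁻¹ * ∏ e ∈ G.edgeFinset, (1 + W t e)) with hF
  have hvanish : ∀ t ∈ (Finset.univ : Finset V).powerset,
      t ∉ ({∅, Finset.univ} : Finset (Finset V)) → F t = 0 := by
    intro t _ htne
    simp only [Finset.mem_insert, Finset.mem_singleton] at htne
    push_neg at htne
    obtain ⟨ht0, htu⟩ := htne
    obtain ⟨i, hi⟩ := ht0
    obtain ⟨j, hj⟩ : ∃ j, j ∉ t := by
      by_contra hcon
      push_neg at hcon
      exact htu (Finset.eq_univ_iff_forall.2 hcon)
    obtain ⟨p⟩ := hconn.preconnected i j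
    obtain ⟨x, y, hadj, hx, hy⟩ := exists_cross (σ := fun v => v ∈ t) p ⟨hi, hj⟩
    have hxyne : x ≠ y := hadj.ne
    have hmem : s(x, y) ∈ G.edgeFinset := by
      rw [SimpleGraph.mem_edgeFinset, SimpleGraph.mem_edgeSet]; exact hadj
    have hzero : 1 + W t s(x, y) = 0 := by
      rw [hW]
      simp only
      rw [prod_ite_mem (ct t) x y hxyne, hct]
      simp only [if_pos hx, if_neg hy, ph_mul_ps]
      ring
    rw [hF]
    simp only
    rw [Finset.prod_eq_zero hmem hzero]
    ring
  have hsum : ∑ t ∈ (Finset.univ : Finset V).powerset, F t = F ∅ + F Finset.univ := by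
    rw [← Finset.sum_subset (s₁ := ({∅, Finset.univ} : Finset (Finset V)))
        (by intro t ht; simp only [Finset.mem_insert, Finset.mem_singleton] at ht
            rcases ht with h | h <;> simp [h])
        (fun t ht htn => hvanish t ht htn)]
    rw [Finset.sum_pair (Ne.symm (Finset.univ_nonempty.ne_empty))]
  rw [hsum]
  -- Step 3: evaluate F ∅ and F univ
  have hedge : ∀ e ∈ G.edgeFinset, ¬ e.IsDiag :=
    fun e he => G.not_isDiag_of_mem_edgeSet (SimpleGraph.mem_edgeFinset.1 he)
  have hFuniv : F Finset.univ = (ph ^ N)⁻¹ * (Real.sqrt 5 * ph) ^ m := by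
    rw [hF]
    simp only [Finset.sdiff_self, Finset.card_empty, pow_zero, one_mul]
    congr 1
    · rw [hct]; simp [Finset.prod_const, Finset.card_univ]; rfl
    · rw [Finset.prod_congr rfl (fun e he => ?_), Finset.prod_const, hm]
      induction e using Sym2.ind with
      | _ u v =>
        have huv : u ≠ v := by simpa [Sym2.mk_isDiag_iff] using hedge _ he
        rw [hW]; simp only
        rw [prod_ite_mem (ct Finset.univ) u v huv, hct]
        simp [one_add_ph_sq]
  have hFempty : F ∅ = ((-ps) ^ N)⁻¹ * (-(Real.sqrt 5 * ps)) ^ m := by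
    rw [hF]
    simp only [Finset.sdiff_empty, Finset.card_univ]
    have h2 : (∏ i : V, ct ∅ i)⁻¹ = (ps ^ N)⁻¹ := by
      rw [hct]; simp [Finset.prod_const, Finset.card_univ]; rfl
    have h3 : ∏ e ∈ G.edgeFinset, (1 + W ∅ e) = (-(Real.sqrt 5 * ps)) ^ m := by
      rw [Finset.prod_congr rfl (fun e he => ?_), Finset.prod_const, hm]
      induction e using Sym2.ind with
      | _ u v =>
        have huv : u ≠ v := by simpa [Sym2.mk_isDiag_iff] using hedge _ he
        rw [hW]; simp only
        rw [prod_ite_mem (ct ∅) u v huv, hct]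
        simp [one_add_ps_sq]
    rw [h2, h3, neg_pow ps N, mul_inv]
    have h4 : (((-1 : ℝ) ^ N)⁻¹ : ℝ) = (-1 : ℝ) ^ N := by
      rw [← inv_pow, inv_neg, inv_one]
    rw [h4]
    ring
  rw [hFempty, hFuniv]
  -- Step 4: final arithmetic
  have hx0 : Real.sqrt 5 * ph ≠ 0 := mul_ne_zero (ne_of_gt sqrt5_pos) ph_ne
  have hps_neg : ps < 0 := by
    have h5 : (2:ℝ) < Real.sqrt 5 := by
      nlinarith [sqrt5_sq, sqrt5_pos]
    unfold ps; linarith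
  have hy0 : -(Real.sqrt 5 * ps) ≠ 0 := by
    have : Real.sqrt 5 * ps < 0 := mul_neg_of_pos_of_neg sqrt5_pos hps_neg
    linarith
  have hxval : (5 + Real.sqrt 5) / 2 = Real.sqrt 5 * ph := by
    unfold ph; nlinarith [sqrt5_sq]
  have hyval : (5 - Real.sqrt 5) / 2 = -(Real.sqrt 5 * ps) := by
    unfold ps; nlinarith [sqrt5_sq]
  have hexp : n - 1 = (m : ℤ) - (N : ℤ) := by rw [hn]; ring
  rw [hxval, hyval, hexp]
  rw [zpow_sub₀ hx0, zpow_sub₀ hy0, zpow_natCast, zpow_natCast, zpow_natCast, zpow_natCast]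
  rw [mul_pow (Real.sqrt 5) ph N]
  have hyN : (-(Real.sqrt 5 * ps)) ^ N = Real.sqrt 5 ^ N * (-ps) ^ N := by
    rw [← mul_pow]; ring_nf
  rw [hyN]
  have hsN : (Real.sqrt 5 : ℝ) ^ N ≠ 0 := pow_ne_zero _ (ne_of_gt sqrt5_pos)
  have hphN : (ph : ℝ) ^ N ≠ 0 := pow_ne_zero _ ph_ne
  have hpsN : ((-ps) : ℝ) ^ N ≠ 0 := pow_ne_zero _ (by intro h; exact ps_ne (by linarith [neg_eq_zero.1 h]))
  field_simp
end

section
/- Let G = (V,E) be a finite simple graph with |E| ≥ |V|. Then in ℤ[β], the polynomial (1-β)^{|E|-|V|} divides Σ_{s ⊆ E} (-β)^{|s|} · Π_{i ∈ V} (1 - deg_s(i)). -/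
open Polynomial Finset

lemma sum_supersets {α : Type*} [DecidableEq α] (E A : Finset α) (hA : A ⊆ E) :
    ∑ s ∈ E.powerset.filter (fun s => A ⊆ s), (-X : Polynomial ℤ) ^ s.card
      = (-X) ^ A.card * (1 - X) ^ (E.card - A.card) := by
  have key : ∑ t ∈ (E \ A).powerset, (-X : Polynomial ℤ) ^ t.card
      = (1 - X) ^ (E \ A).card := by
    have h := Finset.prod_add (fun _ : α => (-X : Polynomial ℤ)) (fun _ => 1) (E \ A)
    simp only [prod_const, one_pow, mul_one] at h
    rw [← h, neg_add_eq_sub]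
  have hbij : ∑ s ∈ E.powerset.filter (fun s => A ⊆ s), (-X : Polynomial ℤ) ^ s.card
      = ∑ t ∈ (E \ A).powerset, (-X : Polynomial ℤ) ^ (t.card + A.card) := by
    refine Finset.sum_nbij' (fun s => s \ A) (fun t => t ∪ A) ?_ ?_ ?_ ?_ ?_
    · intro s hs
      simp only [mem_filter, mem_powerset] at hs ⊢
      exact sdiff_subset_sdiff hs.1 (Finset.Subset.refl _)
    · intro t ht
      simp only [mem_powerset] at ht
      simp only [mem_filter, mem_powerset]
      constructor
      · exact union_subset (ht.trans Finset.sdiff_subset) hA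
      · exact subset_union_right
    · intro s hs
      simp only [mem_filter, mem_powerset] at hs
      exact sdiff_union_of_subset hs.2
    · intro t ht
      simp only [mem_powerset] at ht
      have hd : Disjoint t A := Finset.disjoint_of_subset_left ht Finset.sdiff_disjoint
      show (t ∪ A) \ A = t
      rw [Finset.union_sdiff_right, Finset.sdiff_eq_self_iff_disjoint.2 hd]
    · intro s hs
      simp only [mem_filter, mem_powerset] at hs
      rw [Finset.card_sdiff_add_card_eq_card hs.2]
  rw [hbij]
  simp only [pow_add]
  rw [← Finset.sum_mul, key, Finset.card_sdiff_of_subset hA]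
  ring

theorem one_sub_beta_pow_dvd_theta {V : Type*} [Fintype V] [DecidableEq V]
    (G : SimpleGraph V) [DecidableRel G.Adj] (h : Fintype.card V ≤ G.edgeFinset.card) :
    (1 - X : Polynomial ℤ) ^ (G.edgeFinset.card - Fintype.card V) ∣
      ∑ s ∈ G.edgeFinset.powerset,
        (-X : Polynomial ℤ) ^ s.card * ∏ i : V, (1 - (degIn s i : Polynomial ℤ)) := by
  classical
  set E := G.edgeFinset with hE
  set n := Fintype.card V with hn
  -- Step 1: expand the product as a sum over functions V → Option (Sym2 V)
  have hprod : ∀ s : Finset (Sym2 V),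
      (∏ i : V, (1 - (degIn s i : Polynomial ℤ)))
        = ∑ F : V → Option (Sym2 V),
            (if ∀ i e, F i = some e → e ∈ s ∧ i ∈ e
             then (-1 : Polynomial ℤ) ^ (univ.filter fun i => F i ≠ none).card else 0) := by
    intro s
    have h1 : ∀ i : V, (1 - (degIn s i : Polynomial ℤ))
        = ∑ o ∈ insert none ((s.filter (fun e => i ∈ e)).map
            ⟨some, Option.some_injective _⟩),
            (if o = none then (1 : Polynomial ℤ) else -1) := by
      intro i
      rw [Finset.sum_insert (by simp)]
      simp [degIn, Finset.sum_map, sub_eq_add_neg]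
    calc (∏ i : V, (1 - (degIn s i : Polynomial ℤ)))
        = ∏ i : V, ∑ o ∈ insert none ((s.filter (fun e => i ∈ e)).map
            ⟨some, Option.some_injective _⟩),
            (if o = none then (1 : Polynomial ℤ) else -1) := by
          exact Finset.prod_congr rfl fun i _ => h1 i
      _ = ∑ F ∈ Fintype.piFinset (fun i => insert none ((s.filter (fun e => i ∈ e)).map
            ⟨some, Option.some_injective _⟩)),
            ∏ i : V, (if F i = none then (1 : Polynomial ℤ) else -1) :=
          Finset.prod_univ_sum _ _
      _ = ∑ F : V → Option (Sym2 V),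
            (if ∀ i e, F i = some e → e ∈ s ∧ i ∈ e
             then (-1 : Polynomial ℤ) ^ (univ.filter fun i => F i ≠ none).card else 0) := by
          rw [← Finset.sum_filter]
          have hset : Fintype.piFinset (fun i => insert none ((s.filter (fun e => i ∈ e)).map
              ⟨some, Option.some_injective _⟩))
              = univ.filter (fun F : V → Option (Sym2 V) => ∀ i e, F i = some e → e ∈ s ∧ i ∈ e) := by
            ext F
            simp only [Fintype.mem_piFinset, mem_filter, mem_univ, true_and, mem_insert,
              mem_map, Function.Embedding.coeFn_mk]
            apply forall_congr'
            intro i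
            cases hFi : F i with
            | none => simp
            | some e => simp [hFi, eq_comm, and_comm]
          rw [hset]
          refine Finset.sum_congr rfl fun F _ => ?_
          rw [Finset.prod_ite (fun _ => (1:Polynomial ℤ)) (fun _ => (-1:Polynomial ℤ))]
          simp [Finset.prod_const]
  -- Step 2: swap sums
  have hswap : ∑ s ∈ E.powerset,
      (-X : Polynomial ℤ) ^ s.card * ∏ i : V, (1 - (degIn s i : Polynomial ℤ))
      = ∑ F : V → Option (Sym2 V), ∑ s ∈ E.powerset,
          (-X : Polynomial ℤ) ^ s.card *
          (if ∀ i e, F i = some e → e ∈ s ∧ i ∈ e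
             then (-1 : Polynomial ℤ) ^ (univ.filter fun i => F i ≠ none).card else 0) := by
    rw [Finset.sum_comm]
    refine Finset.sum_congr rfl fun s _ => ?_
    rw [hprod s, Finset.mul_sum]
  rw [hswap]
  refine Finset.dvd_sum fun F _ => ?_
  set A : Finset (Sym2 V) := univ.biUnion (fun i => (F i).toFinset) with hA
  have hAsub : ∀ s : Finset (Sym2 V), (A ⊆ s ↔ ∀ i e, F i = some e → e ∈ s) := by
    intro s
    rw [hA, Finset.biUnion_subset]
    apply forall_congr'
    intro i
    cases hFi : F i with
    | none => simp [hFi]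
    | some e => simp [hFi, Finset.singleton_subset_iff, Option.toFinset]
  by_cases hQ : ∀ i e, F i = some e → e ∈ E ∧ i ∈ e
  · -- the main case
    have hcond : ∀ s ∈ E.powerset,
        ((∀ i e, F i = some e → e ∈ s ∧ i ∈ e) ↔ A ⊆ s) := by
      intro s hs
      rw [hAsub s]
      constructor
      · intro hc i e he; exact (hc i e he).1
      · intro hc i e he; exact ⟨hc i e he, (hQ i e he).2⟩
    have hAE : A ⊆ E := (hAsub E).2 fun i e he => (hQ i e he).1
    have hAcard : A.card ≤ n := by
      calc A.card ≤ ∑ i : V, (F i).toFinset.card := Finset.card_biUnion_le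
        _ ≤ ∑ i : V, 1 := Finset.sum_le_sum fun i _ => by cases F i <;> simp [Option.toFinset]
        _ = n := by simp [hn]
    have : ∑ s ∈ E.powerset,
        (-X : Polynomial ℤ) ^ s.card *
        (if ∀ i e, F i = some e → e ∈ s ∧ i ∈ e
           then (-1 : Polynomial ℤ) ^ (univ.filter fun i => F i ≠ none).card else 0)
        = ((-1 : Polynomial ℤ) ^ (univ.filter fun i => F i ≠ none).card) *
            ((-X) ^ A.card * (1 - X) ^ (E.card - A.card)) := by
      rw [← sum_supersets E A hAE, Finset.sum_filter, Finset.mul_sum]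
      refine Finset.sum_congr rfl fun s hs => ?_
      rw [if_congr (hcond s hs) rfl rfl]
      split <;> ring
    rw [this]
    refine Dvd.dvd.mul_left ?_ _
    refine Dvd.dvd.mul_left ?_ _
    exact pow_dvd_pow _ (Nat.sub_le_sub_left hAcard E.card)
  · -- degenerate case: every summand vanishes
    have : ∑ s ∈ E.powerset,
        (-X : Polynomial ℤ) ^ s.card *
        (if ∀ i e, F i = some e → e ∈ s ∧ i ∈ e
           then (-1 : Polynomial ℤ) ^ (univ.filter fun i => F i ≠ none).card else 0) = 0 := by
      refine Finset.sum_eq_zero fun s hs => ?_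
      rw [if_neg, mul_zero]
      intro hc
      exact hQ fun i e he => ⟨(Finset.mem_powerset.1 hs) (hc i e he).1, (hc i e he).2⟩
    rw [this]
    exact dvd_zero _
end
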